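/- The function g(x) = (s/p)‖x‖^p on ℝ^d, for p ≥ 2 and s > 0, is uniformly convex of degree p with parameter σ = s·2^{2-p}; that is, g(y) ≥ g(x) + ⟨∇g(x), y - x⟩ + (s·2^{2-p}/p)‖y - x‖^p for all x, y. -/

import Mathlib

open RealInnerProductSpace

section aux

private lemma two_rpow_le_one {p : ℝ} (hp : 2 ≤ p) : (2:ℝ) ^ (2 - p) ≤ 1 :=
  Real.rpow_le_one_of_one_le_of_nonpos one_le_two (by linarith)

private lemma superadd {q u v : ℝ} (hq : 1 ≤ q) (hu : 0 ≤ u) (hv : 0 ≤ v) :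
    u ^ q + v ^ q ≤ (u + v) ^ q := by
  lift u to NNReal using hu
  lift v to NNReal using hv
  exact_mod_cast NNReal.add_rpow_le_rpow_add u v hq

private lemma pmean {q u v : ℝ} (hq : 1 ≤ q) (hu : 0 ≤ u) (hv : 0 ≤ v) :
    (u + v) ^ q ≤ 2 ^ (q - 1) * (u ^ q + v ^ q) := by
  lift u to NNReal using hu
  lift v to NNReal using hv
  exact_mod_cast NNReal.rpow_add_le_mul_rpow_add_rpow u v hq

private lemma sq_rpow_half {r : ℝ} (hr : 0 ≤ r) (p : ℝ) : (r ^ 2) ^ (p / 2) = r ^ p := by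
  rw [← Real.rpow_natCast r 2, ← Real.rpow_mul hr,
    show ((2:ℕ):ℝ) * (p / 2) = p by push_cast; ring]

private lemma rpow_sub_one_mul {a : ℝ} (ha : 0 ≤ a) (p : ℝ) (hp : 2 ≤ p) :
    a ^ (p - 1) * a = a ^ p := by
  rcases eq_or_lt_of_le ha with h | h
  · rw [← h, Real.zero_rpow (by linarith : p - (1:ℝ) ≠ 0),
      Real.zero_rpow (by linarith : p ≠ 0), zero_mul]
  · rw [← Real.rpow_add_one h.ne' (p - 1)]
    norm_num

/-- Case `a ≤ b`. -/
private lemma lemA1 (p : ℝ) (hp : 2 ≤ p) {a b : ℝ} (ha : 0 ≤ a) (hab : a ≤ b) :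
    a ^ p + p * a ^ (p - 1) * (b - a) + 2 ^ (2 - p) * (b - a) ^ p ≤ b ^ p := by
  have hp1 : (1:ℝ) ≤ p := by linarith
  have hq1 : (1:ℝ) ≤ p - 1 := by linarith
  have hp0 : (0:ℝ) < p := by linarith
  set f : ℝ → ℝ := fun x => x ^ p - a ^ p - p * a ^ (p - 1) * (x - a)
      - 2 ^ (2 - p) * (x - a) ^ p with hf
  set f' : ℝ → ℝ := fun x => p * x ^ (p - 1) - p * a ^ (p - 1)
      - 2 ^ (2 - p) * (p * (x - a) ^ (p - 1)) with hf'
  have hder : ∀ x : ℝ, HasDerivAt f (f' x) x := by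
    intro x
    have h1 : HasDerivAt (fun x : ℝ => x ^ p) (p * x ^ (p - 1)) x :=
      Real.hasDerivAt_rpow_const (Or.inr hp1)
    have h2 : HasDerivAt (fun x : ℝ => (x - a) ^ p) (p * (x - a) ^ (p - 1) * 1) x :=
      HasDerivAt.comp x (Real.hasDerivAt_rpow_const (Or.inr hp1))
        ((hasDerivAt_id x).sub_const a)
    have h3 : HasDerivAt (fun x : ℝ => p * a ^ (p - 1) * (x - a)) (p * a ^ (p - 1) * 1) x :=
      ((hasDerivAt_id x).sub_const a).const_mul _
    have h := ((h1.sub_const (a ^ p)).sub h3).sub (h2.const_mul ((2:ℝ) ^ (2 - p)))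
    refine h.congr_deriv ?_
    simp only [hf']; ring
  have hmono : MonotoneOn f (Set.Icc a b) := by
    apply monotoneOn_of_deriv_nonneg (convex_Icc a b)
    · exact fun x _ => (hder x).continuousAt.continuousWithinAt
    · exact fun x _ => (hder x).differentiableAt.differentiableWithinAt
    · intro x hx
      rw [interior_Icc] at hx
      rw [(hder x).deriv]
      have hxa : (0:ℝ) ≤ x - a := by linarith [hx.1]
      have hs1 : a ^ (p - 1) + (x - a) ^ (p - 1) ≤ x ^ (p - 1) := by
        have h := superadd hq1 ha hxa
        rwa [show a + (x - a) = x by ring] at h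
      have h2c : 2 ^ (2 - p) * (x - a) ^ (p - 1) ≤ (x - a) ^ (p - 1) :=
        mul_le_of_le_one_left (Real.rpow_nonneg hxa _) (two_rpow_le_one hp)
      have hsum : a ^ (p - 1) + 2 ^ (2 - p) * (x - a) ^ (p - 1) ≤ x ^ (p - 1) := by linarith
      have := mul_le_mul_of_nonneg_left hsum hp0.le
      simp only [hf']
      nlinarith [this]
  have hfa : f a = 0 := by
    simp [hf, Real.zero_rpow hp0.ne']
  have hfb := hmono (Set.left_mem_Icc.2 hab) (Set.right_mem_Icc.2 hab) hab
  rw [hfa] at hfb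
  simp only [hf] at hfb
  linarith

/-- Case `0 ≤ b ≤ a`. -/
private lemma lemA2 (p : ℝ) (hp : 2 ≤ p) {a b : ℝ} (hb : 0 ≤ b) (hab : b ≤ a) :
    a ^ p + p * a ^ (p - 1) * (b - a) + 2 ^ (2 - p) * (a - b) ^ p ≤ b ^ p := by
  have hp1 : (1:ℝ) ≤ p := by linarith
  have hq1 : (1:ℝ) ≤ p - 1 := by linarith
  have hp0 : (0:ℝ) < p := by linarith
  set f : ℝ → ℝ := fun x => x ^ p - a ^ p - p * a ^ (p - 1) * (x - a)
      - 2 ^ (2 - p) * (a - x) ^ p with hf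
  set f' : ℝ → ℝ := fun x => p * x ^ (p - 1) - p * a ^ (p - 1)
      + 2 ^ (2 - p) * (p * (a - x) ^ (p - 1)) with hf'
  have hder : ∀ x : ℝ, HasDerivAt f (f' x) x := by
    intro x
    have h1 : HasDerivAt (fun x : ℝ => x ^ p) (p * x ^ (p - 1)) x :=
      Real.hasDerivAt_rpow_const (Or.inr hp1)
    have h2 : HasDerivAt (fun x : ℝ => (a - x) ^ p) (p * (a - x) ^ (p - 1) * (-1)) x :=
      HasDerivAt.comp x (Real.hasDerivAt_rpow_const (Or.inr hp1))
        ((hasDerivAt_id x).const_sub a)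
    have h3 : HasDerivAt (fun x : ℝ => p * a ^ (p - 1) * (x - a)) (p * a ^ (p - 1) * 1) x :=
      ((hasDerivAt_id x).sub_const a).const_mul _
    have h := ((h1.sub_const (a ^ p)).sub h3).sub (h2.const_mul ((2:ℝ) ^ (2 - p)))
    refine h.congr_deriv ?_
    simp only [hf']; ring
  have hanti : AntitoneOn f (Set.Icc b a) := by
    apply antitoneOn_of_deriv_nonpos (convex_Icc b a)
    · exact fun x _ => (hder x).continuousAt.continuousWithinAt
    · exact fun x _ => (hder x).differentiableAt.differentiableWithinAt
    · intro x hx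
      rw [interior_Icc] at hx
      rw [(hder x).deriv]
      have hx0 : (0:ℝ) ≤ x := le_trans hb hx.1.le
      have hxa : (0:ℝ) ≤ a - x := by linarith [hx.2]
      have hs1 : x ^ (p - 1) + (a - x) ^ (p - 1) ≤ a ^ (p - 1) := by
        have h := superadd hq1 hx0 hxa
        rwa [show x + (a - x) = a by ring] at h
      have h2c : 2 ^ (2 - p) * (a - x) ^ (p - 1) ≤ (a - x) ^ (p - 1) :=
        mul_le_of_le_one_left (Real.rpow_nonneg hxa _) (two_rpow_le_one hp)
      have hsum : x ^ (p - 1) + 2 ^ (2 - p) * (a - x) ^ (p - 1) ≤ a ^ (p - 1) := by linarith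
      have := mul_le_mul_of_nonneg_left hsum hp0.le
      simp only [hf']
      nlinarith [this]
  have hfa : f a = 0 := by
    simp [hf, Real.zero_rpow hp0.ne']
  have hfb := hanti (Set.left_mem_Icc.2 hab) (Set.right_mem_Icc.2 hab) hab
  rw [hfa] at hfb
  simp only [hf] at hfb
  linarith

/-- Case `b ≤ 0 ≤ a`. -/
private lemma lemA3 (p : ℝ) (hp : 2 ≤ p) {a b : ℝ} (ha : 0 ≤ a) (hb : b ≤ 0) :
    a ^ p + p * a ^ (p - 1) * (b - a) + 2 ^ (2 - p) * (a - b) ^ p ≤ (-b) ^ p := by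
  have hp1 : (1:ℝ) ≤ p := by linarith
  have hq1 : (1:ℝ) ≤ p - 1 := by linarith
  have hp0 : (0:ℝ) < p := by linarith
  set f : ℝ → ℝ := fun x => (-x) ^ p - a ^ p - p * a ^ (p - 1) * (x - a)
      - 2 ^ (2 - p) * (a - x) ^ p with hf
  set f' : ℝ → ℝ := fun x => -(p * (-x) ^ (p - 1)) - p * a ^ (p - 1)
      + 2 ^ (2 - p) * (p * (a - x) ^ (p - 1)) with hf'
  have hder : ∀ x : ℝ, HasDerivAt f (f' x) x := by
    intro x
    have h1 : HasDerivAt (fun x : ℝ => (-x) ^ p) (p * (-x) ^ (p - 1) * (-1)) x :=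
      HasDerivAt.comp x (Real.hasDerivAt_rpow_const (Or.inr hp1)) (hasDerivAt_neg x)
    have h2 : HasDerivAt (fun x : ℝ => (a - x) ^ p) (p * (a - x) ^ (p - 1) * (-1)) x :=
      HasDerivAt.comp x (Real.hasDerivAt_rpow_const (Or.inr hp1))
        ((hasDerivAt_id x).const_sub a)
    have h3 : HasDerivAt (fun x : ℝ => p * a ^ (p - 1) * (x - a)) (p * a ^ (p - 1) * 1) x :=
      ((hasDerivAt_id x).sub_const a).const_mul _
    have h := ((h1.sub_const (a ^ p)).sub h3).sub (h2.const_mul ((2:ℝ) ^ (2 - p)))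
    refine h.congr_deriv ?_
    simp only [hf']; ring
  have hanti : AntitoneOn f (Set.Icc b 0) := by
    apply antitoneOn_of_deriv_nonpos (convex_Icc b 0)
    · exact fun x _ => (hder x).continuousAt.continuousWithinAt
    · exact fun x _ => (hder x).differentiableAt.differentiableWithinAt
    · intro x hx
      rw [interior_Icc] at hx
      rw [(hder x).deriv]
      have hx0 : (0:ℝ) ≤ -x := by linarith [hx.2]
      have hs1 : (a - x) ^ (p - 1) ≤ 2 ^ (p - 1 - 1) * (a ^ (p - 1) + (-x) ^ (p - 1)) := by
        have h := pmean hq1 ha hx0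
        rwa [show a + -x = a - x by ring] at h
      have hmul : (2:ℝ) ^ (2 - p) * (2:ℝ) ^ (p - 1 - 1) = 1 := by
        rw [← Real.rpow_add two_pos, show (2:ℝ) - p + (p - 1 - 1) = 0 by ring, Real.rpow_zero]
      have h2p : (0:ℝ) ≤ 2 ^ (2 - p) := Real.rpow_nonneg (by norm_num) _
      have hs2 : 2 ^ (2 - p) * (a - x) ^ (p - 1) ≤ a ^ (p - 1) + (-x) ^ (p - 1) := by
        have := mul_le_mul_of_nonneg_left hs1 h2p
        calc 2 ^ (2 - p) * (a - x) ^ (p - 1)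
            ≤ 2 ^ (2 - p) * (2 ^ (p - 1 - 1) * (a ^ (p - 1) + (-x) ^ (p - 1))) := this
          _ = a ^ (p - 1) + (-x) ^ (p - 1) := by rw [← mul_assoc, hmul, one_mul]
      have := mul_le_mul_of_nonneg_left hs2 hp0.le
      simp only [hf']
      nlinarith [this]
  have hfb := hanti (Set.left_mem_Icc.2 hb) (Set.right_mem_Icc.2 hb) hb
  have hf0 : 0 ≤ f 0 := by
    have hmul := rpow_sub_one_mul ha p hp
    have hap : (0:ℝ) ≤ a ^ p := Real.rpow_nonneg ha p
    have h21 := two_rpow_le_one hp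
    simp only [hf, neg_zero, Real.zero_rpow hp0.ne', sub_zero, zero_sub, mul_neg]
    nlinarith [hmul, hap, h21]
  have := le_trans hf0 hfb
  simp only [hf] at this
  linarith

private lemma lemA (p : ℝ) (hp : 2 ≤ p) {a b : ℝ} (ha : 0 ≤ a) :
    a ^ p + p * a ^ (p - 1) * (b - a) + 2 ^ (2 - p) * |b - a| ^ p ≤ |b| ^ p := by
  rcases le_total a b with h | h
  · rw [abs_of_nonneg (le_trans ha h), abs_of_nonneg (sub_nonneg.2 h)]
    exact lemA1 p hp ha h
  · rcases le_total 0 b with h0 | h0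
    · rw [abs_of_nonneg h0, abs_sub_comm, abs_of_nonneg (sub_nonneg.2 h)]
      exact lemA2 p hp h0 h
    · rw [abs_of_nonpos h0, abs_sub_comm, abs_of_nonneg (sub_nonneg.2 h)]
      exact lemA3 p hp ha h0

private lemma keyReal (p : ℝ) (hp : 2 ≤ p) {a b t c : ℝ} (ha : 0 ≤ a) (hb : 0 ≤ b)
    (hc : 0 ≤ c) (hT : |t| ≤ a * b) (hc2 : c ^ 2 = a ^ 2 + b ^ 2 - 2 * t) :
    a ^ p + p * (a ^ (p - 2) * (t - a ^ 2)) + 2 ^ (2 - p) * c ^ p ≤ b ^ p := by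
  have hp0 : (0:ℝ) < p := by linarith
  have h21 := two_rpow_le_one hp
  have h2p : (0:ℝ) ≤ 2 ^ (2 - p) := Real.rpow_nonneg (by norm_num) _
  rcases eq_or_lt_of_le ha with ha0 | ha0
  · -- a = 0
    have ha0' : a = 0 := ha0.symm
    subst ha0'
    have ht0 : t = 0 := by
      have := abs_nonneg t
      have : |t| = 0 := le_antisymm (by simpa using hT) (abs_nonneg t)
      exact abs_eq_zero.1 this
    have hcb : c = b := by nlinarith [hc2, ht0]
    subst hcb
    rw [ht0]
    have hcp : (0:ℝ) ≤ c ^ p := Real.rpow_nonneg hb p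
    rw [Real.zero_rpow hp0.ne']
    have : (0:ℝ) ^ (p - 2) * ((0:ℝ) - (0:ℝ) ^ 2) = 0 := by
      norm_num
    rw [this]
    nlinarith [hcp, h21]
  rcases eq_or_lt_of_le hb with hb0 | hb0
  · -- b = 0
    have hb0' : b = 0 := hb0.symm
    subst hb0'
    have ht0 : t = 0 := by
      have : |t| = 0 := le_antisymm (by simpa using hT) (abs_nonneg t)
      exact abs_eq_zero.1 this
    have hca : c = a := by nlinarith [hc2, ht0]
    subst hca
    rw [ht0, Real.zero_rpow hp0.ne']
    have hpa : c ^ (p - 2) * c ^ 2 = c ^ p := by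
      rw [← Real.rpow_natCast c 2, ← Real.rpow_add ha0]
      norm_num
    have hcp : (0:ℝ) ≤ c ^ p := Real.rpow_nonneg ha p
    nlinarith [hcp, h21, hpa, hp]
  -- main case : 0 < a, 0 < b
  have hab : (0:ℝ) < a * b := mul_pos ha0 hb0
  set L : ℝ := (a * b + t) / (2 * (a * b)) with hLdef
  set M : ℝ := (a * b - t) / (2 * (a * b)) with hMdef
  have hL : 0 ≤ L := div_nonneg (by linarith [neg_abs_le t]) (by positivity)
  have hM : 0 ≤ M := div_nonneg (by linarith [le_abs_self t]) (by positivity)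
  have hLM : L + M = 1 := by
    rw [hLdef, hMdef]
    field_simp
    ring
  have hq2 : (1:ℝ) ≤ p / 2 := by linarith
  have hcx := (convexOn_rpow hq2).2 (Set.mem_Ici.2 (sq_nonneg (a - b)))
    (Set.mem_Ici.2 (sq_nonneg (a + b))) hL hM hLM
  simp only [smul_eq_mul] at hcx
  have hpt : L * (a - b) ^ 2 + M * (a + b) ^ 2 = c ^ 2 := by
    rw [hc2, hLdef, hMdef]
    field_simp
    ring
  rw [hpt] at hcx
  have hr1 : ((a - b) ^ 2 : ℝ) ^ (p / 2) = |a - b| ^ p := by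
    rw [← sq_abs, sq_rpow_half (abs_nonneg _)]
  have hr2 : ((a + b) ^ 2 : ℝ) ^ (p / 2) = (a + b) ^ p := by
    rw [sq_rpow_half (by linarith : (0:ℝ) ≤ a + b)]
  have hr3 : (c ^ 2 : ℝ) ^ (p / 2) = c ^ p := sq_rpow_half hc p
  rw [hr1, hr2, hr3, abs_sub_comm a b] at hcx
  -- hcx : c ^ p ≤ L * |b - a| ^ p + M * (a + b) ^ p
  have E1 : a ^ p + p * a ^ (p - 1) * (b - a) + 2 ^ (2 - p) * |b - a| ^ p ≤ b ^ p := by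
    have h := lemA p hp (b := b) ha
    rwa [abs_of_nonneg hb] at h
  have E2 : a ^ p + p * a ^ (p - 1) * (-b - a) + 2 ^ (2 - p) * (a + b) ^ p ≤ b ^ p := by
    have h := lemA p hp (b := -b) ha
    rw [abs_neg, abs_of_nonneg hb, show -b - a = -(b + a) by ring, abs_neg,
      abs_of_nonneg (by linarith : (0:ℝ) ≤ b + a), show b + a = a + b by ring] at h
    linarith [h]
  have hA : a ^ (p - 1) = a ^ (p - 2) * a := by
    rw [show p - 1 = p - 2 + 1 by ring, Real.rpow_add_one ha0.ne']
  calc a ^ p + p * (a ^ (p - 2) * (t - a ^ 2)) + 2 ^ (2 - p) * c ^ p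
      ≤ a ^ p + p * (a ^ (p - 2) * (t - a ^ 2))
        + 2 ^ (2 - p) * (L * |b - a| ^ p + M * (a + b) ^ p) := by
        nlinarith [mul_le_mul_of_nonneg_left hcx h2p]
    _ = L * (a ^ p + p * a ^ (p - 1) * (b - a) + 2 ^ (2 - p) * |b - a| ^ p)
        + M * (a ^ p + p * a ^ (p - 1) * (-b - a) + 2 ^ (2 - p) * (a + b) ^ p) := by
        rw [hA, hLdef, hMdef]
        field_simp
        ring
    _ ≤ L * b ^ p + M * b ^ p :=
        add_le_add (mul_le_mul_of_nonneg_left E1 hL) (mul_le_mul_of_nonneg_left E2 hM)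
    _ = b ^ p := by rw [← add_mul, hLM, one_mul]

end aux

/-- The power of the Euclidean norm `g(x) = (s/p)‖x‖^p`, with gradient `s‖x‖^{p-2}x`,
is uniformly convex of degree `p` with parameter `σ = s·2^{2-p}`. -/
theorem stmt2 {d : ℕ} (p s : ℝ) (hp : 2 ≤ p) (hs : 0 < s) :
    ∀ x y : EuclideanSpace ℝ (Fin d),
      s / p * ‖y‖ ^ p ≥
        s / p * ‖x‖ ^ p + ⟪(s * ‖x‖ ^ (p - 2)) • x, y - x⟫ +
          s * (2 : ℝ) ^ (2 - p) / p * ‖y - x‖ ^ p := by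
  intro x y
  have hp0 : (0:ℝ) < p := by linarith
  have hT : |⟪x, y⟫| ≤ ‖x‖ * ‖y‖ := abs_real_inner_le_norm x y
  have hc2 : ‖y - x‖ ^ 2 = ‖x‖ ^ 2 + ‖y‖ ^ 2 - 2 * ⟪x, y⟫ := by
    rw [norm_sub_sq_real, real_inner_comm]
    ring
  have key := keyReal p hp (norm_nonneg x) (norm_nonneg y) (norm_nonneg (y - x)) hT hc2
  have hinner : ⟪(s * ‖x‖ ^ (p - 2)) • x, y - x⟫
      = s * (‖x‖ ^ (p - 2) * (⟪x, y⟫ - ‖x‖ ^ 2)) := by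
    rw [real_inner_smul_left, inner_sub_right, real_inner_self_eq_norm_sq]
    ring
  rw [ge_iff_le, hinner]
  have hkey := mul_le_mul_of_nonneg_left key (le_of_lt (div_pos hs hp0))
  calc s / p * ‖x‖ ^ p + s * (‖x‖ ^ (p - 2) * (⟪x, y⟫ - ‖x‖ ^ 2))
        + s * (2:ℝ) ^ (2 - p) / p * ‖y - x‖ ^ p
      = s / p * (‖x‖ ^ p + p * (‖x‖ ^ (p - 2) * (⟪x, y⟫ - ‖x‖ ^ 2))
          + 2 ^ (2 - p) * ‖y - x‖ ^ p) := by
        field_simp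
    _ ≤ s / p * ‖y‖ ^ p := hkey
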